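/- Let R be a commutative ring with n invertible in R, and B an R-algebra such that B/R is a Frobenius extension with system (E, X_k, Y_k), k=1,…,m. If M_n(B)/R is a separable Frobenius extension (with the Frobenius system E′(b)=E(trace(b)), X_k e_{i,j}, Y_k e_{j,i}), then B/R is a separable Frobenius extension; more precisely, if d = ∑_{p,q} d_{(p,q)} e_{p,q} ∈ M_n(B) centralizes B and satisfies ∑_{i,j,k} X_k e_{i,j} d Y_k e_{j,i} = I, then ∑_k X_k (∑_j d_{(j,j)}) Y_k = 1_B with ∑_j d_{(j,j)} ∈ C_B(R). -/

import Mathlib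

/-- Let `n` be invertible in `R` and let `B/R` be a Frobenius extension with system
`(E, X_k, Y_k)`. If `M_n(B)/R` is a separable Frobenius extension — i.e. there is
`d = ∑ d_{(p,q)} e_{p,q} ∈ M_n(B)` centralizing the scalar matrices `B·I` with
`∑_{i,j,k} (X_k e_{i,j}) d (Y_k e_{j,i}) = I` — then `B/R` is a separable Frobenius
extension: `∑_k X_k (∑_j d_{(j,j)}) Y_k = 1` with `∑_j d_{(j,j)} ∈ C_B(R)`. -/
theorem stmt_14 (R B : Type*) [CommRing R] [Ring B] [Algebra R B] (n m : ℕ)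
    (hninv : IsUnit (n : R))
    (E : B →ₗ[R] R) (X Y : Fin m → B)
    (hFrob : ∀ b : B,
      (∑ k : Fin m, E (b * X k) • Y k = b) ∧ (∑ k : Fin m, E (Y k * b) • X k = b))
    (d : Matrix (Fin n) (Fin n) B)
    (hd : ∀ b : B, d * (b • (1 : Matrix (Fin n) (Fin n) B)) =
          (b • (1 : Matrix (Fin n) (Fin n) B)) * d)
    (hsep : ∑ i : Fin n, ∑ j : Fin n, ∑ k : Fin m,
        Matrix.single i j (X k) * d * Matrix.single j i (Y k) = 1) :
    (∑ k : Fin m, X k * (∑ j : Fin n, d j j) * Y k = 1) ∧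
    (∀ r : R, (∑ j : Fin n, d j j) * algebraMap R B r =
      algebraMap R B r * (∑ j : Fin n, d j j)) := by
  -- each entry of `d` commutes with every element of `B`
  have hcomm : ∀ (b : B) (p q : Fin n), d p q * b = b * d p q := by
    intro b p q
    have h := congrFun (congrFun (hd b) p) q
    simpa [Matrix.mul_apply, Matrix.one_apply, mul_ite, ite_mul,
      Finset.sum_ite_eq, Finset.sum_ite_eq'] using h
  have htr : ∀ b : B, (∑ j : Fin n, d j j) * b = b * (∑ j : Fin n, d j j) := by
    intro b
    rw [Finset.sum_mul, Finset.mul_sum]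
    exact Finset.sum_congr rfl fun j _ => hcomm b j j
  refine ⟨?_, fun r => htr _⟩
  rcases Nat.eq_zero_or_pos n with hn | hn
  · -- `n = 0` : then `0` is a unit in `R`, so `R` and hence `B` are trivial
    subst hn
    have h0 : (0 : R) = 1 := isUnit_zero_iff.mp (by simpa using hninv)
    have hB : (0 : B) = 1 := by
      have := congrArg (algebraMap R B) h0
      simpa using this
    have : Subsingleton B := subsingleton_of_zero_eq_one hB
    exact Subsingleton.elim _ _
  · -- `n > 0`: read off the `(0,0)` entry of `hsep`
    set i0 : Fin n := ⟨0, hn⟩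
    have h := congrFun (congrFun hsep i0) i0
    simp only [Matrix.sum_apply] at h
    have hterm : ∀ (i j : Fin n) (k : Fin m),
        (Matrix.single i j (X k) * d * Matrix.single j i (Y k)) i0 i0
        = if i = i0 then X k * d j j * Y k else 0 := by
      intro i j k
      simp only [Matrix.mul_apply, Matrix.single, Matrix.of_apply, ite_and,
        mul_ite, ite_mul, zero_mul, mul_zero, Finset.sum_ite_eq, Finset.sum_ite_eq',
        Finset.mem_univ, if_true, eq_comm (a := i)]
      split <;> simp [mul_assoc]
    rw [Finset.sum_congr rfl (fun i _ => Finset.sum_congr rfl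
      (fun j _ => Finset.sum_congr rfl (fun k _ => hterm i j k)))] at h
    simp only [Finset.sum_ite_irrel, Finset.sum_const_zero, Finset.sum_ite_eq,
      Finset.sum_ite_eq', Finset.mem_univ, if_true] at h
    have h1 : (1 : Matrix (Fin n) (Fin n) B) i0 i0 = 1 := by simp
    rw [h1] at h
    rw [Finset.sum_comm] at h
    rw [← h]
    refine Finset.sum_congr rfl fun k _ => ?_
    rw [Finset.mul_sum, Finset.sum_mul]
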